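/- Let F : E → ℤ be a weight function on the ground set of a finite matroid M taking finitely many values. A basis B of M has minimum F-weight (weight of B = sum of F(b) over b ∈ B) if and only if for every ε, the set B ∩ {e : F(e) ≤ ε} is a basis of the restriction of M to {e : F(e) ≤ ε}. -/

import Mathlib

open Finset in
private lemma sum_layer {α : Type*} [DecidableEq α] (S : Finset α) (F : α → ℤ) (a c : ℤ)
    (ha : ∀ x ∈ S, a ≤ F x) (hc : ∀ x ∈ S, F x ≤ c) :
    ∑ x ∈ S, F x =
      a * S.card + ∑ t ∈ Finset.Ioc a c, ((S.filter (fun x => t ≤ F x)).card : ℤ) := by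
  classical
  have key : ∀ x ∈ S, F x = a + ∑ t ∈ Finset.Ioc a c, (if t ≤ F x then (1:ℤ) else 0) := by
    intro x hx
    have h1 : (Finset.Ioc a c).filter (fun t => t ≤ F x) = Finset.Ioc a (F x) := by
      ext t
      simp only [Finset.mem_filter, Finset.mem_Ioc]
      constructor
      · rintro ⟨⟨h1, _⟩, h3⟩; exact ⟨h1, h3⟩
      · rintro ⟨h1, h3⟩; exact ⟨⟨h1, h3.trans (hc x hx)⟩, h3⟩
    rw [Finset.sum_boole, h1, Int.card_Ioc]
    have := ha x hx
    omega
  calc ∑ x ∈ S, F x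
      = ∑ x ∈ S, (a + ∑ t ∈ Finset.Ioc a c, (if t ≤ F x then (1:ℤ) else 0)) :=
        Finset.sum_congr rfl key
    _ = a * S.card + ∑ x ∈ S, ∑ t ∈ Finset.Ioc a c, (if t ≤ F x then (1:ℤ) else 0) := by
        rw [Finset.sum_add_distrib, Finset.sum_const, nsmul_eq_mul, mul_comm]
    _ = a * S.card + ∑ t ∈ Finset.Ioc a c, ∑ x ∈ S, (if t ≤ F x then (1:ℤ) else 0) := by
        rw [Finset.sum_comm]
    _ = _ := by simp [Finset.sum_boole]

theorem stmt6 {α : Type*} (M : Matroid α) [M.Finite] (F : α → ℤ)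
    (hF : (Set.range F).Finite)
    (B : Set α) (hB : M.IsBase B) :
    (∀ B' : Set α, M.IsBase B' → ∑ᶠ e ∈ B, F e ≤ ∑ᶠ e ∈ B', F e) ↔
    ∀ t : ℤ, M.IsBasis (B ∩ {e | F e ≤ t}) {e ∈ M.E | F e ≤ t} := by
  classical
  have hE : M.E.Finite := M.ground_finite
  have hBfin : B.Finite := hE.subset hB.subset_ground
  constructor
  · -- minimal → basis property
    intro hmin t
    set I := B ∩ {e | F e ≤ t} with hIdef
    have hI : M.Indep I := hB.indep.subset Set.inter_subset_left
    have hIX : I ⊆ {e ∈ M.E | F e ≤ t} := fun x hx => ⟨hB.subset_ground hx.1, hx.2⟩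
    obtain ⟨J, hJ, hIJ⟩ := hI.subset_isBasis_of_subset hIX (Set.sep_subset _ _)
    by_contra hcon
    have hne : I ≠ J := fun h => hcon (h ▸ hJ)
    obtain ⟨x, hxJ, hxI⟩ := Set.exists_of_ssubset (hIJ.ssubset_of_ne hne)
    have hxX : x ∈ {e ∈ M.E | F e ≤ t} := hJ.subset hxJ
    have hxB : x ∉ B := fun h => hxI ⟨h, hxX.2⟩
    have hI' : M.Indep (insert x I) := hJ.indep.subset (Set.insert_subset hxJ hIJ)
    obtain ⟨B'', hB'', hI'B'', hB''sub⟩ := hI'.exists_isBase_subset_union_isBase hB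
    have hB''fin : B''.Finite := hE.subset hB''.subset_ground
    have hsub : B'' ⊆ insert x B := by
      refine hB''sub.trans (Set.union_subset ?_ (Set.subset_insert _ _))
      exact Set.insert_subset_insert Set.inter_subset_left
    have hxB'' : x ∈ B'' := hI'B'' (Set.mem_insert _ _)
    set S0 := B'' \ {x} with hS0def
    have hS0B : S0 ⊆ B := by
      rintro y ⟨hy, hyx⟩
      rcases hsub hy with rfl | h
      · exact absurd rfl hyx
      · exact h
    have hS0fin : S0.Finite := hB''fin.diff
    have hB''eq : B'' = insert x S0 := by
      rw [hS0def, Set.insert_diff_singleton, Set.insert_eq_self.2 hxB'']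
    have hDeq : B \ S0 = B \ B'' := by
      ext y
      simp only [Set.mem_diff, hS0def, Set.mem_diff, Set.mem_singleton_iff, not_and, not_not]
      constructor
      · rintro ⟨hyB, hy⟩
        refine ⟨hyB, fun hyB'' => ?_⟩
        have := hy hyB''
        exact hxB (this ▸ hyB)
      · rintro ⟨hyB, hy⟩
        exact ⟨hyB, fun h => absurd h hy⟩
    have hcard := hB''.encard_eq_encard_of_isBase hB
    have h1 : (B \ S0).encard + S0.encard = B.encard :=
      Set.encard_diff_add_encard_of_subset hS0B
    have h2 : B''.encard = S0.encard + 1 := by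
      rw [hB''eq]
      exact Set.encard_insert_of_notMem (fun h => h.2 rfl)
    have hS0top : S0.encard ≠ ⊤ := hS0fin.encard_lt_top.ne
    have hD1 : (B \ B'').encard = 1 := by
      rw [← hDeq]
      have h3 : (B \ S0).encard + S0.encard = 1 + S0.encard := by
        rw [h1, ← hcard, h2, add_comm]
      exact WithTop.add_right_cancel hS0top h3
    obtain ⟨y, hy⟩ := Set.encard_eq_one.mp hD1
    have hyD : y ∈ B \ B'' := hy ▸ Set.mem_singleton y
    have hyB : y ∈ B := hyD.1
    have hyB'' : y ∉ B'' := hyD.2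
    have hBeq : B = insert y S0 := by
      apply Set.Subset.antisymm
      · intro b hb
        by_cases hbB'' : b ∈ B''
        · exact Set.mem_insert_of_mem _ ⟨hbB'', fun h => hxB (h ▸ hb)⟩
        · have : b ∈ B \ B'' := ⟨hb, hbB''⟩
          rw [hy] at this
          exact this ▸ Set.mem_insert _ _
      · exact Set.insert_subset hyB hS0B
    have hyS0 : y ∉ S0 := fun h => hyB'' h.1
    have hxS0 : x ∉ S0 := fun h => h.2 rfl
    have hxt : F x ≤ t := hxX.2
    have hyt : t < F y := by
      by_contra hle
      push_neg at hle
      exact hyB'' (hI'B'' (Set.mem_insert_of_mem _ ⟨hyB, hle⟩))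
    have hw := hmin B'' hB''
    rw [hBeq, finsum_mem_insert F hyS0 hS0fin, hB''eq, finsum_mem_insert F hxS0 hS0fin] at hw
    linarith
  · -- basis property → minimal
    intro hbasis B' hB'
    have hB'fin : B'.Finite := hE.subset hB'.subset_ground
    have hcmp : ∀ s : ℤ, (B' ∩ {e | F e ≤ s}).encard ≤ (B ∩ {e | F e ≤ s}).encard := by
      intro s
      have hI : M.Indep (B' ∩ {e | F e ≤ s}) := hB'.indep.subset Set.inter_subset_left
      have hIX : B' ∩ {e | F e ≤ s} ⊆ {e ∈ M.E | F e ≤ s} :=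
        fun x hx => ⟨hB'.subset_ground hx.1, hx.2⟩
      obtain ⟨J, hJ, hIJ⟩ := hI.subset_isBasis_of_subset hIX (Set.sep_subset _ _)
      calc (B' ∩ {e | F e ≤ s}).encard ≤ J.encard := Set.encard_le_encard hIJ
        _ = (B ∩ {e | F e ≤ s}).encard := hJ.encard_eq_encard (hbasis s)
    rcases isEmpty_or_nonempty α with h | h
    · rw [Set.eq_empty_of_isEmpty B, Set.eq_empty_of_isEmpty B']
    · have hTne : hF.toFinset.Nonempty := by
        rw [Set.Finite.toFinset_nonempty]
        exact Set.range_nonempty F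
      set a := hF.toFinset.min' hTne with ha
      set c := hF.toFinset.max' hTne with hc
      have haF : ∀ x : α, a ≤ F x := fun x =>
        Finset.min'_le _ _ (by simp [Set.Finite.mem_toFinset])
      have hcF : ∀ x : α, F x ≤ c := fun x =>
        Finset.le_max' _ _ (by simp [Set.Finite.mem_toFinset])
      set TB := hBfin.toFinset with hTB
      set TB' := hB'fin.toFinset with hTB'
      have hwB : ∑ᶠ e ∈ B, F e = ∑ x ∈ TB, F x := by
        rw [← finsum_mem_coe_finset, hTB, Set.Finite.coe_toFinset]
      have hwB' : ∑ᶠ e ∈ B', F e = ∑ x ∈ TB', F x := by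
        rw [← finsum_mem_coe_finset, hTB', Set.Finite.coe_toFinset]
      rw [hwB, hwB', sum_layer TB F a c (fun x _ => haF x) (fun x _ => hcF x),
        sum_layer TB' F a c (fun x _ => haF x) (fun x _ => hcF x)]
      have hcardeq : TB.card = TB'.card := by
        have hbc := hB.encard_eq_encard_of_isBase hB'
        rw [← Set.ncard_coe_finset TB, ← Set.ncard_coe_finset TB', hTB, hTB',
          Set.Finite.coe_toFinset, Set.Finite.coe_toFinset, Set.ncard_def, Set.ncard_def, hbc]
      rw [hcardeq]
      apply add_le_add_right
      apply Finset.sum_le_sum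
      intro t _
      have e1 := Finset.card_filter_add_card_filter_not (s := TB) (p := fun x => t ≤ F x)
      have e2 := Finset.card_filter_add_card_filter_not (s := TB') (p := fun x => t ≤ F x)
      have hneg1 : TB.filter (fun x => ¬ t ≤ F x) = TB.filter (fun x => F x ≤ t - 1) :=
        Finset.filter_congr (fun x _ => by constructor <;> (intro; omega))
      have hneg2 : TB'.filter (fun x => ¬ t ≤ F x) = TB'.filter (fun x => F x ≤ t - 1) :=
        Finset.filter_congr (fun x _ => by constructor <;> (intro; omega))
      rw [hneg1] at e1
      rw [hneg2] at e2
      have hc1 : (TB.filter (fun x => F x ≤ t - 1)).card = (B ∩ {e | F e ≤ t - 1}).ncard := by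
        rw [← Set.ncard_coe_finset]
        congr 1
        ext z
        simp [hTB, Set.Finite.mem_toFinset]
      have hc2 : (TB'.filter (fun x => F x ≤ t - 1)).card = (B' ∩ {e | F e ≤ t - 1}).ncard := by
        rw [← Set.ncard_coe_finset]
        congr 1
        ext z
        simp [hTB', Set.Finite.mem_toFinset]
      have hfinB : (B ∩ {e | F e ≤ t - 1}).Finite := hBfin.subset Set.inter_subset_left
      have hle : (B' ∩ {e | F e ≤ t - 1}).ncard ≤ (B ∩ {e | F e ≤ t - 1}).ncard := by
        rw [Set.ncard_def, Set.ncard_def]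
        exact ENat.toNat_le_toNat (hcmp (t - 1)) (Set.encard_ne_top_iff.mpr hfinB)
      rw [hc1] at e1
      rw [hc2] at e2
      have : (TB.filter (fun x => t ≤ F x)).card ≤ (TB'.filter (fun x => t ≤ F x)).card := by
        omega
      exact_mod_cast this
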